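/- Let ḡ be a Lorentzian 3×3 real symmetric matrix, ḡ8 an invertible 8×8 real symmetric matrix, ω ∈ ℝ, and set W² := ω²·|ḡ|. If W² ≥ 1, then there exist no invertible 3×3 real symmetric matrix g, invertible 8×8 real symmetric matrix g8 and c ∈ ℝ such that M_Ω(ḡ, ḡ8, ω) = M_C(g, g8, c): when W² ≥ 1 the trivector cannot be gauged away in favour of a metric and 3-form. -/

import Mathlib

open Matrix

/-- The (g,C)-frame generalised metric: a 14×14 matrix in 3+3+8 block form. -/
noncomputable def MC (g : Matrix (Fin 3) (Fin 3) ℝ) (g8 : Matrix (Fin 8) (Fin 8) ℝ) (c : ℝ) :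
    Matrix ((Fin 3 ⊕ Fin 3) ⊕ Fin 8) ((Fin 3 ⊕ Fin 3) ⊕ Fin 8) ℝ :=
  |g.det * g8.det| ^ (-(1 : ℝ) / 2) •
    fromBlocks
      (fromBlocks ((1 + c ^ 2 / g.det) • g) ((c / g.det) • g) ((c / g.det) • g)
        ((1 / g.det) • g))
      0 0 g8

/-- The (ḡ,Ω)-frame generalised metric: a 14×14 matrix in 3+3+8 block form. -/
noncomputable def MOmega (g : Matrix (Fin 3) (Fin 3) ℝ) (g8 : Matrix (Fin 8) (Fin 8) ℝ)
    (ω : ℝ) : Matrix ((Fin 3 ⊕ Fin 3) ⊕ Fin 8) ((Fin 3 ⊕ Fin 3) ⊕ Fin 8) ℝ :=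
  |g.det * g8.det| ^ (-(1 : ℝ) / 2) •
    fromBlocks
      (fromBlocks g (ω • g) (ω • g) ((ω ^ 2 + 1 / g.det) • g))
      0 0 g8

/-- A 3×3 real symmetric (Hermitian) matrix is Lorentzian if it has exactly one negative
and two positive eigenvalues. -/
def Lorentzian3 (g : Matrix (Fin 3) (Fin 3) ℝ) : Prop :=
  ∃ hg : g.IsHermitian,
    {i | hg.eigenvalues i < 0}.ncard = 1 ∧ {i | 0 < hg.eigenvalues i}.ncard = 2

/-- For Lorentzian ḡ, invertible symmetric ḡ8, and W² := ω²·|ḡ| ≥ 1 (where |ḡ| = −det ḡ),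
the (ḡ,Ω)-frame generalised metric cannot be written as any (g,C)-frame generalised metric:
the trivector cannot be gauged away. -/
theorem stmt_4 (gb : Matrix (Fin 3) (Fin 3) ℝ) (gb8 : Matrix (Fin 8) (Fin 8) ℝ)
    (hgb : Lorentzian3 gb) (hgb8 : gb8.IsSymm) (hgb8det : gb8.det ≠ 0) (ω : ℝ)
    (hW : 1 ≤ ω ^ 2 * (-gb.det)) :
    ¬ ∃ (g : Matrix (Fin 3) (Fin 3) ℝ) (g8 : Matrix (Fin 8) (Fin 8) ℝ) (c : ℝ),
        g.IsSymm ∧ g.det ≠ 0 ∧ g8.IsSymm ∧ g8.det ≠ 0 ∧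
        MOmega gb gb8 ω = MC g g8 c := by
  rintro ⟨g, g8, c, -, hgdet, -, hg8det, heq⟩
  have hDneg : gb.det < 0 := by nlinarith [sq_nonneg ω, sq_nonneg (ω * gb.det)]
  have hgbdet : gb.det ≠ 0 := ne_of_lt hDneg
  set D := gb.det with hD
  set d := g.det with hd
  set α := |gb.det * gb8.det| ^ (-(1:ℝ)/2) with hα
  set β := |g.det * g8.det| ^ (-(1:ℝ)/2) with hβ
  have hαpos : 0 < α := Real.rpow_pos_of_pos (abs_pos.mpr (mul_ne_zero hgbdet hgb8det)) _
  have hβpos : 0 < β := Real.rpow_pos_of_pos (abs_pos.mpr (mul_ne_zero hgdet hg8det)) _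
  have E1 : ∀ i j, α * gb i j = β * ((1 + c^2/d) * g i j) := by
    intro i j
    have := congrFun (congrFun heq (Sum.inl (Sum.inl i))) (Sum.inl (Sum.inl j))
    simpa [MOmega, MC, Matrix.smul_apply, smul_eq_mul, ← hα, ← hβ, ← hD, ← hd, -abs_mul] using this
  have E2 : ∀ i j, α * (ω * gb i j) = β * (c/d * g i j) := by
    intro i j
    have := congrFun (congrFun heq (Sum.inl (Sum.inl i))) (Sum.inl (Sum.inr j))
    simpa [MOmega, MC, Matrix.smul_apply, smul_eq_mul, ← hα, ← hβ, ← hD, ← hd, -abs_mul] using this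
  have E3 : ∀ i j, α * ((ω^2 + 1/D) * gb i j) = β * (1/d * g i j) := by
    intro i j
    have := congrFun (congrFun heq (Sum.inl (Sum.inr i))) (Sum.inl (Sum.inr j))
    simpa [MOmega, MC, Matrix.smul_apply, smul_eq_mul, ← hα, ← hβ, ← hD, ← hd, -abs_mul] using this
  obtain ⟨i, j, hij⟩ : ∃ i j, gb i j ≠ 0 := by
    by_contra h
    push_neg at h
    have h0 : gb = 0 := by ext i j; exact h i j
    apply hgbdet
    rw [hD, h0]
    simp
  set k := D * ω^2 + 1 with hk
  have hknonpos : k ≤ 0 := by nlinarith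
  have e1 := E1 i j
  have e2 := E2 i j
  have e3 := E3 i j
  have hαne : α ≠ 0 := ne_of_gt hαpos
  have hβne : β ≠ 0 := ne_of_gt hβpos
  have hH : g i j ≠ 0 := by
    intro h0
    rw [h0] at e1
    simp [hαne, hij] at e1
  have hkne : k ≠ 0 := by
    intro h0
    have hω : ω^2 + 1/D = 0 := by
      field_simp
      linarith [h0]
    rw [hω] at e3
    simp [hβne, hgdet, hH] at e3
  have hkneg : k < 0 := lt_of_le_of_ne hknonpos hkne
  field_simp at e1 e2 e3
  -- c * k = ω * D
  have hc : c * (ω^2*D+1) = ω * D := by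
    have h0 : α * gb i j * d * (ω*D - c*(ω^2*D+1)) = 0 := by linear_combination D*e2 - c*e3
    have hne : α * gb i j * d ≠ 0 := mul_ne_zero (mul_ne_zero hαne hij) hgdet
    rcases mul_eq_zero.mp h0 with h | h
    · exact absurd h hne
    · linarith
  -- D = k * (d + c^2)
  have hsum : D = (ω^2*D+1) * (d + c^2) := by
    have h0 : α * gb i j * d * (D - (ω^2*D+1)*(d + c^2)) = 0 := by
      linear_combination D*e1 - (d + c^2)*e3
    have hne : α * gb i j * d ≠ 0 := mul_ne_zero (mul_ne_zero hαne hij) hgdet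
    rcases mul_eq_zero.mp h0 with h | h
    · exact absurd h hne
    · linarith
  -- d * k^2 = D
  have hdval : d * (ω^2*D+1)^2 = D := by
    linear_combination (-(ω^2*D+1))*hsum - (c*(ω^2*D+1)+ω*D)*hc
  have hkne' : (ω^2*D+1) ≠ 0 := by intro h; apply hkne; rw [hk]; linarith
  -- g is a scalar multiple of gb
  have hg : ∀ i' j', g i' j' * (β * (ω^2*D+1)) = α * gb i' j' := by
    intro i' j'
    have e := E3 i' j'
    field_simp at e
    have h0 : (g i' j' * (β * (ω^2*D+1)) - α * gb i' j') * D = 0 := by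
      linear_combination (-(ω^2*D+1)) * e + (α * gb i' j') * hdval
    rcases mul_eq_zero.mp h0 with h | h
    · linarith
    · exact absurd h hgbdet
  have hgm : g = (α/(β*(ω^2*D+1))) • gb := by
    ext i' j'
    have := hg i' j'
    simp only [Matrix.smul_apply, smul_eq_mul]
    field_simp
    linear_combination hg i' j' 
  have hdet : d * (β*(ω^2*D+1))^3 = α^3 * D := by
    have hgdet2 : g.det = (α/(β*(ω^2*D+1)))^3 * gb.det := by
      rw [hgm, Matrix.det_smul]
      norm_num
    rw [hd, hgdet2, ← hD]
    field_simp
  have h2 : d * ((ω^2*D+1)^2 * (β^3*(ω^2*D+1) - α^3)) = 0 := by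
    linear_combination hdet - α^3 * hdval
  rcases mul_eq_zero.mp h2 with h | h
  · exact hgdet h
  rcases mul_eq_zero.mp h with h | h
  · exact pow_ne_zero 2 hkne' h
  have hfin : α^3 = β^3 * (ω^2*D+1) := by linarith
  have hkneg' : ω^2*D+1 < 0 := by
    rcases lt_or_eq_of_le hknonpos with h' | h'
    · rw [hk] at h'; linarith
    · exact absurd h' hkne
  nlinarith [pow_pos hαpos 3, pow_pos hβpos 3, mul_neg_of_pos_of_neg (pow_pos hβpos 3) hkneg']
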